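/- arXiv:2101.10843 — 3 statements merged into one kernel-verified Lean document; each statement's English description precedes it below -/
import Mathlib

section
/- The chain of ideals 0 ⊂ 𝔭_1 ⊂ 𝔭_2 ⊂ 𝔭_3 ⊂ 𝔭_4 ⊂ 𝔭_5 of S, where 𝔭_j is the ideal generated by σ, ᾱ_1, …, ᾱ_{3+j}, is strictly increasing: each inclusion is proper. -/
open MvPolynomial

noncomputable section

variable (k : Type*) [Field k]

/-- The polynomial ring in 12 variables `x₁..x₄, y₁..y₄, z₁..z₄`:
a variable is indexed by `(t, i)` with `t : Fin 3` (`0 ↦ x`, `1 ↦ y`, `2 ↦ z`)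
and `i : Fin 4` the index modulo 4. -/
abbrev B := MvPolynomial (Fin 3 × Fin 4) k

/-- `x_i` (indices modulo 4). -/
def xv (i : ℕ) : B k := X (0, (Fin.ofNat 4 i))
/-- `y_i` (indices modulo 4). -/
def yv (i : ℕ) : B k := X (1, (Fin.ofNat 4 i))
/-- `z_i` (indices modulo 4). -/
def zv (i : ℕ) : B k := X (2, (Fin.ofNat 4 i))

/-- `σ = x₁x₂x₃x₄ · y₁y₂y₃y₄ · z₁z₂z₃z₄`, the product of all 12 variables. -/
def sig : B k := ∏ p : Fin 3 × Fin 4, X p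

/-- The substitution `x_i ↦ x_{i+1}, y_i ↦ y_{i+1}, z_i ↦ z_{i+1}` (indices mod 4). -/
def rot : B k →ₐ[k] B k := aeval (fun p => X (p.1, p.2 + 1))

/-- `ᾱ₁ = x₂x₃²x₄ · y₁y₃y₄² · z₁z₂²z₃`. -/
def a1 : B k :=
  xv k 2 * xv k 3 ^ 2 * xv k 4 * yv k 1 * yv k 3 * yv k 4 ^ 2 * zv k 1 * zv k 2 ^ 2 * zv k 3

/-- `ᾱ₂ = (x₁x₄y₁y₄z₁z₄)²`. -/
def a2 : B k := (xv k 1 * xv k 4 * yv k 1 * yv k 4 * zv k 1 * zv k 4) ^ 2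

/-- `ᾱ_j` for `j ≥ 1`: `ᾱ₁`, `ᾱ₂` are as above and `ᾱ_{j+2}` is obtained from `ᾱ_j`
by applying the substitution `rot`. -/
def alpha (j : ℕ) : B k := (⇑(rot k))^[(j - 1) / 2] (if j % 2 = 1 then a1 k else a2 k)
/-- The cycle algebra `S = k[σ, ᾱ₁, …, ᾱ₈] ⊆ B`. -/
def Scal : Subalgebra k (B k) := Algebra.adjoin k (insert (sig k) (alpha k '' Set.Icc 1 8))
/-- Reduction of an index to `{1, …, 8}`, implementing "indices modulo 8". -/
def idx (j : ℕ) : ℕ := (j - 1) % 8 + 1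

lemma idx_mem (j : ℕ) : idx j ∈ Set.Icc 1 8 :=
  ⟨Nat.le_add_left 1 _, Nat.succ_le_of_lt (Nat.mod_lt _ (by norm_num))⟩

/-- `σ` as an element of `S`. -/
def σS : ↥(Scal k) := ⟨sig k, Algebra.subset_adjoin (Set.mem_insert _ _)⟩

/-- `ᾱ_j` (indices modulo 8) as an element of `S`. -/
def αS (j : ℕ) : ↥(Scal k) :=
  ⟨alpha k (idx j), Algebra.subset_adjoin (Set.mem_insert_of_mem _ ⟨idx j, idx_mem j, rfl⟩)⟩
/-- The ideal `𝔭_j = (σ, ᾱ₁, …, ᾱ_{3+j})` of `S`. -/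
def pIdeal (j : ℕ) : Ideal ↥(Scal k) := Ideal.span (insert (σS k) (αS k '' Set.Icc 1 (3 + j)))

/- auxiliary: evaluation points -/
def w1 : Fin 3 × Fin 4 → k := fun p => if p = (0,3) ∨ p = (1,0) ∨ p = (2,2) then 0 else 1
def w2 : Fin 3 × Fin 4 → k := fun p => if p.2 = 0 ∨ p.2 = 1 then 0 else 1
def w3 : Fin 3 × Fin 4 → k := fun p => if p = (0,0) ∨ p = (1,1) ∨ p = (2,3) then 0 else 1
def w4 : Fin 3 × Fin 4 → k := fun p => if p.2 = 1 ∨ p.2 = 2 then 0 else 1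

lemma eval_sig_zero (v : Fin 3 × Fin 4 → k) (p : Fin 3 × Fin 4) (hv : v p = 0) :
    eval v (sig k) = 0 := by
  rw [sig, map_prod]
  apply Finset.prod_eq_zero (Finset.mem_univ p)
  simpa using hv

lemma not_mem_pIdeal (v : Fin 3 × Fin 4 → k) (j m : ℕ)
    (h0 : eval v (sig k) = 0)
    (h1 : ∀ i, 1 ≤ i → i ≤ 3 + j → eval v (alpha k (idx i)) = 0)
    (h2 : eval v (alpha k (idx m)) ≠ 0) : αS k m ∉ pIdeal k j := by
  intro hm
  have hle : pIdeal k j ≤ RingHom.ker ((eval v).comp (Scal k).val.toRingHom) := by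
    rw [pIdeal, Ideal.span_le]
    rintro s hs
    rcases Set.mem_insert_iff.1 hs with h | ⟨i, hi, rfl⟩
    · subst h
      simpa [RingHom.mem_ker, σS] using h0
    · simpa [RingHom.mem_ker, αS] using h1 i hi.1 hi.2
  exact h2 (by simpa [RingHom.mem_ker, αS] using hle hm)

lemma mem_pIdeal (j m : ℕ) (h1 : 1 ≤ m) (h2 : m ≤ 3 + j) : αS k m ∈ pIdeal k j :=
  Ideal.subset_span (Set.mem_insert_of_mem _ ⟨m, ⟨h1, h2⟩, rfl⟩)

lemma pIdeal_mono (j : ℕ) : pIdeal k j ≤ pIdeal k (j + 1) := by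
  apply Ideal.span_mono
  apply Set.insert_subset_insert
  exact Set.image_mono (Set.Icc_subset_Icc le_rfl (by omega))

set_option maxHeartbeats 2000000 in
/-- The chain `0 ⊂ 𝔭₁ ⊂ 𝔭₂ ⊂ 𝔭₃ ⊂ 𝔭₄ ⊂ 𝔭₅` of ideals of `S` is strictly increasing. -/
theorem stmt3 :
    (⊥ : Ideal ↥(Scal k)) < pIdeal k 1 ∧
      ∀ j ∈ Finset.Icc 1 4, pIdeal k j < pIdeal k (j + 1) := by
  constructor
  · rw [bot_lt_iff_ne_bot]
    intro h
    have hm : σS k ∈ pIdeal k 1 := Ideal.subset_span (Set.mem_insert _ _)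
    rw [h, Ideal.mem_bot] at hm
    have : eval (fun _ => (1:k)) (sig k) = 0 := by
      have := congrArg Subtype.val hm
      simp only [σS] at this
      rw [this]; simp
    simp [sig] at this
  · intro j hj
    simp only [Finset.mem_Icc] at hj
    obtain ⟨hj1, hj2⟩ := hj
    have key : αS k (4 + j) ∉ pIdeal k j := by
      interval_cases j
      · refine not_mem_pIdeal k (w1 k) 1 5 (eval_sig_zero k _ (0,3) (by simp [w1])) ?_ ?_
        · intro i hi1 hi2
          interval_cases i <;>
          · simp only [idx, alpha, a1, a2, xv, yv, zv, rot, Function.iterate_succ_apply',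
              Function.iterate_zero, id_eq, map_mul, map_pow, aeval_X, eval_mul, eval_pow, eval_X]
            norm_num
            simp [w1] <;> decide
        · simp only [idx, alpha, a1, a2, xv, yv, zv, rot, Function.iterate_succ_apply',
            Function.iterate_zero, id_eq, map_mul, map_pow, aeval_X, eval_mul, eval_pow, eval_X]
          norm_num [w1]
          try decide
      · refine not_mem_pIdeal k (w2 k) 2 6 (eval_sig_zero k _ (0,0) (by simp [w2])) ?_ ?_
        · intro i hi1 hi2
          interval_cases i <;>
          · simp only [idx, alpha, a1, a2, xv, yv, zv, rot, Function.iterate_succ_apply',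
              Function.iterate_zero, id_eq, map_mul, map_pow, aeval_X, eval_mul, eval_pow, eval_X]
            norm_num
            simp [w2]
        · simp only [idx, alpha, a1, a2, xv, yv, zv, rot, Function.iterate_succ_apply',
            Function.iterate_zero, id_eq, map_mul, map_pow, aeval_X, eval_mul, eval_pow, eval_X]
          norm_num [w2]
          try decide
      · refine not_mem_pIdeal k (w3 k) 3 7 (eval_sig_zero k _ (0,0) (by simp [w3])) ?_ ?_
        · intro i hi1 hi2
          interval_cases i <;>
          · simp only [idx, alpha, a1, a2, xv, yv, zv, rot, Function.iterate_succ_apply',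
              Function.iterate_zero, id_eq, map_mul, map_pow, aeval_X, eval_mul, eval_pow, eval_X]
            norm_num
            simp [w3] <;> decide
        · simp only [idx, alpha, a1, a2, xv, yv, zv, rot, Function.iterate_succ_apply',
            Function.iterate_zero, id_eq, map_mul, map_pow, aeval_X, eval_mul, eval_pow, eval_X]
          norm_num [w3]
          try decide
      · refine not_mem_pIdeal k (w4 k) 4 8 (eval_sig_zero k _ (0,1) (by simp [w4])) ?_ ?_
        · intro i hi1 hi2
          interval_cases i <;>
          · simp only [idx, alpha, a1, a2, xv, yv, zv, rot, Function.iterate_succ_apply',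
              Function.iterate_zero, id_eq, map_mul, map_pow, aeval_X, eval_mul, eval_pow, eval_X]
            norm_num
            simp [w4] <;> decide
        · simp only [idx, alpha, a1, a2, xv, yv, zv, rot, Function.iterate_succ_apply',
            Function.iterate_zero, id_eq, map_mul, map_pow, aeval_X, eval_mul, eval_pow, eval_X]
          norm_num [w4]
          try decide
    exact lt_of_le_of_ne (pIdeal_mono k j) fun h =>
      key (h ▸ mem_pIdeal k (j + 1) (4 + j) (by omega) (by omega))


end
end

section
/- For every integer n ≥ 1, the monomial ᾱ_1ⁿ does not lie in R. -/
open MvPolynomial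

noncomputable section

variable (k : Type*) [Field k]

/-- The ideal `I = (σ², ᾱ_jᾱ_{j+1}ᾱ_{j+2} | j ∈ {1, …, 8})` of `S`, indices modulo 8. -/
def Ic : Ideal ↥(Scal k) :=
  Ideal.span (insert (σS k ^ 2)
    {p | ∃ j ∈ Finset.Icc 1 8, p = αS k j * αS k (j + 1) * αS k (j + 2)})

/-- The subset `R = k[σ] + I` of `S`. -/
def Rset : Set ↥(Scal k) :=
  {r | ∃ p ∈ Algebra.adjoin k {σS k}, ∃ s ∈ Ic k, r = p + s}

-- AUX START
def wtAux : Fin 3 × Fin 4 → ℕ := fun p => ![![1,0,1,2],![2,1,0,1],![0,1,2,1]] p.1 p.2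
abbrev TAux := MvPolynomial (Fin 2) k
def phiAux : B k →ₐ[k] TAux k := aeval (fun p => X 0 ^ wtAux p * X 1)
def wlAux : ℕ → ℕ := fun j => [18,10,12,10,6,14,12,14].getD (j-1) 0

def GW (q : TAux k) : Prop := ∀ d ∈ q.support, 2 * d 0 ≤ 3 * d 1
def GU (q : TAux k) : Prop := ∀ d ∈ q.support, d 0 = d 1
def GV (q : TAux k) : Prop := ∀ d ∈ q.support, 2 * d 0 < 3 * d 1

lemma XX_eq (a b : ℕ) :
    (X 0 : TAux k) ^ a * X 1 ^ b = monomial (Finsupp.single 0 a + Finsupp.single 1 b) 1 := by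
  rw [X_pow_eq_monomial, X_pow_eq_monomial, monomial_mul, one_mul]

lemma supp_XX (a b : ℕ) (d : Fin 2 →₀ ℕ)
    (hd : d ∈ ((X 0 : TAux k) ^ a * X 1 ^ b).support) : d 0 = a ∧ d 1 = b := by
  rw [XX_eq] at hd
  rcases Finset.mem_of_subset support_monomial_subset hd with h
  simp only [Finset.mem_singleton] at h
  subst h
  constructor <;> simp [Finsupp.single_apply]

lemma GW_XX (a b : ℕ) (h : 2 * a ≤ 3 * b) : GW k ((X 0 : TAux k) ^ a * X 1 ^ b) := by
  intro d hd; obtain ⟨h0, h1⟩ := supp_XX k a b d hd; rw [h0, h1]; exact h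

lemma GV_XX (a b : ℕ) (h : 2 * a < 3 * b) : GV k ((X 0 : TAux k) ^ a * X 1 ^ b) := by
  intro d hd; obtain ⟨h0, h1⟩ := supp_XX k a b d hd; rw [h0, h1]; exact h

lemma GU_XX (a : ℕ) : GU k ((X 0 : TAux k) ^ a * X 1 ^ a) := by
  intro d hd; obtain ⟨h0, h1⟩ := supp_XX k a a d hd; rw [h0, h1]

lemma GW_C (r : k) : GW k (C r) := by
  intro d hd
  rw [C_apply] at hd
  rcases Finset.mem_of_subset support_monomial_subset hd with h
  simp only [Finset.mem_singleton] at h; subst h; simp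

lemma GU_C (r : k) : GU k (C r) := by
  intro d hd
  rw [C_apply] at hd
  rcases Finset.mem_of_subset support_monomial_subset hd with h
  simp only [Finset.mem_singleton] at h; subst h; simp

lemma GW_add {p q : TAux k} (hp : GW k p) (hq : GW k q) : GW k (p + q) := fun d hd => by
  rcases Finset.mem_union.1 (support_add hd) with h | h
  exacts [hp d h, hq d h]

lemma GU_add {p q : TAux k} (hp : GU k p) (hq : GU k q) : GU k (p + q) := fun d hd => by
  rcases Finset.mem_union.1 (support_add hd) with h | h
  exacts [hp d h, hq d h]

lemma GV_add {p q : TAux k} (hp : GV k p) (hq : GV k q) : GV k (p + q) := fun d hd => by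
  rcases Finset.mem_union.1 (support_add hd) with h | h
  exacts [hp d h, hq d h]

lemma GW_mul {p q : TAux k} (hp : GW k p) (hq : GW k q) : GW k (p * q) := fun d hd => by
  rcases Finset.mem_add.1 (support_mul p q hd) with ⟨e, he, f, hf, rfl⟩
  have := hp e he; have := hq f hf
  simp only [Finsupp.add_apply]; omega

lemma GU_mul {p q : TAux k} (hp : GU k p) (hq : GU k q) : GU k (p * q) := fun d hd => by
  rcases Finset.mem_add.1 (support_mul p q hd) with ⟨e, he, f, hf, rfl⟩
  have := hp e he; have := hq f hf
  simp only [Finsupp.add_apply]; omega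

lemma GW_GV_mul {p q : TAux k} (hp : GW k p) (hq : GV k q) : GV k (p * q) := fun d hd => by
  rcases Finset.mem_add.1 (support_mul p q hd) with ⟨e, he, f, hf, rfl⟩
  have := hp e he; have := hq f hf
  simp only [Finsupp.add_apply]; omega

lemma GV_zero : GV k 0 := fun d hd => by simp at hd

lemma phi_alpha : ∀ j ∈ Set.Icc 1 8, phiAux k (alpha k j) = X 0 ^ wlAux j * X 1 ^ 12 := by
  rintro j ⟨h1, h2⟩
  interval_cases j <;>
  · simp [alpha, a1, a2, rot, phiAux, xv, yv, zv, wtAux, wlAux, Matrix.vecHead, Matrix.vecTail, Fin.ofNat]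
    ring

lemma phi_sig : phiAux k (sig k) = X 0 ^ 12 * X 1 ^ 12 := by
  rw [sig, map_prod, Fintype.prod_prod_type]
  simp [phiAux, wtAux, Fin.prod_univ_succ, Matrix.vecHead, Matrix.vecTail]
  ring

lemma GW_Scal : ∀ c : ↥(Scal k), GW k (phiAux k (c : B k)) := by
  rintro ⟨c, hc⟩
  induction hc using Algebra.adjoin_induction with
  | mem x hx =>
    rcases hx with rfl | ⟨j, hj, rfl⟩
    · rw [phi_sig]; exact GW_XX k 12 12 (by norm_num)
    · rw [phi_alpha k j hj]
      apply GW_XX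
      obtain ⟨h1, h2⟩ := hj
      interval_cases j <;> simp [wlAux]
  | algebraMap r => simpa [algebraMap_eq] using GW_C k r
  | add x y hx hy ihx ihy => rw [map_add]; exact GW_add k ihx ihy
  | mul x y hx hy ihx ihy => rw [map_mul]; exact GW_mul k ihx ihy

lemma GU_adjoin : ∀ p ∈ Algebra.adjoin k {σS k}, GU k (phiAux k ((p : ↥(Scal k)) : B k)) := by
  intro p hp
  induction hp using Algebra.adjoin_induction with
  | mem x hx =>
    rcases hx with rfl
    show GU k (phiAux k (sig k))
    rw [phi_sig]; exact GU_XX k 12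
  | algebraMap r =>
    show GU k (phiAux k ((algebraMap k (B k)) r))
    simpa [algebraMap_eq] using GU_C k r
  | add x y hx hy ihx ihy =>
    show GU k (phiAux k ((x : B k) + (y : B k)))
    rw [map_add]; exact GU_add k ihx ihy
  | mul x y hx hy ihx ihy =>
    show GU k (phiAux k ((x : B k) * (y : B k)))
    rw [map_mul]; exact GU_mul k ihx ihy

lemma GV_Ic : ∀ s ∈ Ic k, GV k (phiAux k ((s : ↥(Scal k)) : B k)) := by
  intro s hs
  induction hs using Submodule.span_induction with
  | mem x hx =>
    rcases hx with rfl | ⟨j, hj, rfl⟩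
    · show GV k (phiAux k ((sig k) ^ 2))
      rw [map_pow, phi_sig]
      have : ((X 0 : TAux k) ^ 12 * X 1 ^ 12) ^ 2 = X 0 ^ 24 * X 1 ^ 24 := by ring
      rw [this]; exact GV_XX k 24 24 (by norm_num)
    · show GV k (phiAux k (alpha k (idx j) * alpha k (idx (j+1)) * alpha k (idx (j+2))))
      rw [map_mul, map_mul]
      rw [phi_alpha k _ (idx_mem j), phi_alpha k _ (idx_mem (j+1)), phi_alpha k _ (idx_mem (j+2))]
      have heq : ∀ a b c : ℕ, (X 0 : TAux k) ^ a * X 1 ^ 12 * (X 0 ^ b * X 1 ^ 12) *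
          (X 0 ^ c * X 1 ^ 12) = X 0 ^ (a + b + c) * X 1 ^ 36 := by intros; ring
      rw [heq]
      apply GV_XX
      simp only [Finset.mem_Icc] at hj
      obtain ⟨h1, h2⟩ := hj
      interval_cases j <;> simp [idx, wlAux]
  | zero => simpa using GV_zero k
  | add x y hx hy ihx ihy =>
    show GV k (phiAux k ((x : B k) + (y : B k)))
    rw [map_add]; exact GV_add k ihx ihy
  | smul a x hx ihx =>
    show GV k (phiAux k ((a : B k) * (x : B k)))
    rw [map_mul]; exact GW_GV_mul k (GW_Scal k a) ihx
-- AUX END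

/-- For every `n ≥ 1`, the monomial `ᾱ₁ⁿ` does not lie in `R = k[σ] + I`. -/
theorem stmt6 : ∀ n : ℕ, 1 ≤ n → αS k 1 ^ n ∉ Rset k := by
  intro n hn h
  obtain ⟨p, hp, s, hs, heq⟩ := h
  have heqB : (a1 k) ^ n = ((p : B k) + (s : B k)) := by
    have h2 := congrArg Subtype.val heq
    simp only [SubmonoidClass.coe_pow, AddMemClass.coe_add] at h2
    convert h2 using 2
    rfl
  have hphi := congrArg (phiAux k) heqB
  rw [map_add, map_pow] at hphi
  have ha1 : phiAux k (a1 k) = X 0 ^ 18 * X 1 ^ 12 := by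
    have := phi_alpha k 1 ⟨le_refl 1, by norm_num⟩
    simpa [alpha, wlAux] using this
  rw [ha1] at hphi
  have hpow : ((X 0 : TAux k) ^ 18 * X 1 ^ 12) ^ n = X 0 ^ (18 * n) * X 1 ^ (12 * n) := by
    rw [mul_pow, ← pow_mul, ← pow_mul]
  rw [hpow] at hphi
  set D : Fin 2 →₀ ℕ := Finsupp.single 0 (18 * n) + Finsupp.single 1 (12 * n) with hD
  have hcoeff1 : coeff D ((X 0 : TAux k) ^ (18 * n) * X 1 ^ (12 * n)) = 1 := by
    rw [XX_eq, hD, coeff_monomial, if_pos rfl]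
  have hD0 : D 0 = 18 * n := by simp [hD, Finsupp.single_apply]
  have hD1 : D 1 = 12 * n := by simp [hD, Finsupp.single_apply]
  have hcp : coeff D (phiAux k (p : B k)) = 0 := by
    by_contra hne
    have := GU_adjoin k p hp D (mem_support_iff.2 hne)
    rw [hD0, hD1] at this; omega
  have hcs : coeff D (phiAux k (s : B k)) = 0 := by
    by_contra hne
    have := GV_Ic k s hs D (mem_support_iff.2 hne)
    rw [hD0, hD1] at this; omega
  rw [hphi, coeff_add, hcp, hcs] at hcoeff1
  rw [add_zero] at hcoeff1; exact zero_ne_one hcoeff1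


end
end

section
/- The ascending chain of ideals of R given by J_n = (ᾱ_1σ², ᾱ_1²σ², …, ᾱ_1ⁿσ²)R, n ≥ 1, is strictly increasing; consequently R is not a noetherian ring. -/
open MvPolynomial

noncomputable section

variable (k : Type*) [Field k]

/-- The center `R = k[σ] + I`, as a `k`-subalgebra of `S`. -/
def Rsub : Subalgebra k ↥(Scal k) where
  carrier := Rset k
  add_mem' := by
    rintro a b ⟨p₁, hp₁, s₁, hs₁, rfl⟩ ⟨p₂, hp₂, s₂, hs₂, rfl⟩
    exact ⟨p₁ + p₂, add_mem hp₁ hp₂, s₁ + s₂, (Ic k).add_mem hs₁ hs₂, add_add_add_comm _ _ _ _⟩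
  mul_mem' := by
    rintro a b ⟨p₁, hp₁, s₁, hs₁, rfl⟩ ⟨p₂, hp₂, s₂, hs₂, rfl⟩
    exact ⟨p₁ * p₂, mul_mem hp₁ hp₂,
      p₁ * s₂ + s₁ * p₂ + s₁ * s₂,
      (Ic k).add_mem ((Ic k).add_mem ((Ic k).mul_mem_left _ hs₂) ((Ic k).mul_mem_right _ hs₁))
        ((Ic k).mul_mem_left _ hs₂),
      by ring⟩
  algebraMap_mem' := fun c =>
    ⟨algebraMap k _ c, Subalgebra.algebraMap_mem _ c, 0, (Ic k).zero_mem, (add_zero _).symm⟩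
/-- `ᾱ₁^m σ²` as an element of `R`. -/
def genR (m : ℕ) : ↥(Rsub k) :=
  ⟨αS k 1 ^ m * σS k ^ 2,
    ⟨0, zero_mem _, αS k 1 ^ m * σS k ^ 2,
      (Ic k).mul_mem_left _ (Ideal.subset_span (Set.mem_insert _ _)), (zero_add _).symm⟩⟩

/-- The ideal `J_n = (ᾱ₁σ², ᾱ₁²σ², …, ᾱ₁ⁿσ²)` of `R`. -/
def Jn (n : ℕ) : Ideal ↥(Rsub k) := Ideal.span (genR k '' Set.Icc 1 n)

set_option maxHeartbeats 1000000
set_option synthInstance.maxHeartbeats 400000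

abbrev V := Fin 3 × Fin 4

def uvec : V →₀ ℕ := ∑ p : V, Finsupp.single p 1

lemma uvec_apply (p : V) : uvec p = 1 := by
  classical
  simp [uvec, Finsupp.finset_sum_apply, Finsupp.single_apply]

lemma sig_eq : sig k = monomial uvec 1 := by
  classical
  have H : ∀ s : Finset V, (∏ p ∈ s, (X p : B k)) =
      monomial (∑ p ∈ s, Finsupp.single p 1) 1 := by
    intro s
    induction s using Finset.induction_on with
    | empty => simp
    | @insert a s h ih =>
      rw [Finset.prod_insert h, Finset.sum_insert h, ih, X, monomial_mul, one_mul]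
  simpa [sig, uvec] using H Finset.univ

def av : V →₀ ℕ :=
  Finsupp.single (0, 2) 1 + Finsupp.single (0, 3) 2 + Finsupp.single (0, 0) 1 +
  Finsupp.single (1, 1) 1 + Finsupp.single (1, 3) 1 + Finsupp.single (1, 0) 2 +
  Finsupp.single (2, 1) 1 + Finsupp.single (2, 2) 2 + Finsupp.single (2, 3) 1

lemma a1_eq : a1 k = monomial av 1 := by
  simp only [a1, av, xv, yv, zv, X, monomial_pow, monomial_mul, one_mul, mul_one, one_pow,
    Finsupp.smul_single, smul_eq_mul, mul_one]
  rw [show (Fin.ofNat 4 2) = 2 from rfl, show (Fin.ofNat 4 3) = 3 from rfl,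
    show (Fin.ofNat 4 4) = 0 from by decide, show (Fin.ofNat 4 1) = 1 from rfl]


lemma av_01 : av (0, 1) = 0 := by
  simp only [av, Finsupp.add_apply, Finsupp.single_apply]
  decide

lemma av_03 : av (0, 3) = 2 := by
  simp only [av, Finsupp.add_apply, Finsupp.single_apply]
  decide

lemma rot_X (p : V) : rot k (X p) = X (p.1, p.2 + 1) := by
  simp [rot]

open Fin.NatCast in
lemma dvd_rot_iter {q : B k} {i : Fin 4} (t : ℕ)
    (h : X ((0 : Fin 3), i) ∣ q) : X ((0 : Fin 3), i + (t : Fin 4)) ∣ (⇑(rot k))^[t] q := by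
  induction t with
  | zero => simpa using h
  | succ t ih =>
    rw [Function.iterate_succ_apply']
    have := map_dvd (rot k) ih
    rw [rot_X] at this
    have harith : ((0 : Fin 3), i + ((t:ℕ) : Fin 4) + 1) = ((0 : Fin 3), i + (((t+1:ℕ)) : Fin 4)) := by
      push_cast
      simp [add_assoc]
    rwa [harith] at this

lemma xv4_dvd_a1 : X ((0 : Fin 3), (0 : Fin 4)) ∣ a1 k :=
  ⟨xv k 2 * xv k 3 ^ 2 * yv k 1 * yv k 3 * yv k 4 ^ 2 * zv k 1 * zv k 2 ^ 2 * zv k 3,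
    by show a1 k = xv k 4 * _; unfold a1; ring⟩

lemma xv3_dvd_a1 : X ((0 : Fin 3), (3 : Fin 4)) ∣ a1 k :=
  ⟨xv k 2 * xv k 3 * xv k 4 * yv k 1 * yv k 3 * yv k 4 ^ 2 * zv k 1 * zv k 2 ^ 2 * zv k 3,
    by show a1 k = xv k 3 * _; unfold a1; ring⟩

lemma xv2_dvd_a1 : X ((0 : Fin 3), (2 : Fin 4)) ∣ a1 k :=
  ⟨xv k 3 ^ 2 * xv k 4 * yv k 1 * yv k 3 * yv k 4 ^ 2 * zv k 1 * zv k 2 ^ 2 * zv k 3,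
    by show a1 k = xv k 2 * _; unfold a1; ring⟩

lemma xv1_dvd_a2 : X ((0 : Fin 3), (1 : Fin 4)) ∣ a2 k :=
  ⟨xv k 1 * (xv k 4 * yv k 1 * yv k 4 * zv k 1 * zv k 4) ^ 2,
    by show a2 k = xv k 1 * _; unfold a2; ring⟩

lemma xv4_dvd_a2 : X ((0 : Fin 3), (0 : Fin 4)) ∣ a2 k :=
  ⟨xv k 4 * (xv k 1 * yv k 1 * yv k 4 * zv k 1 * zv k 4) ^ 2,
    by show a2 k = xv k 4 * _; unfold a2; ring⟩

open Fin.NatCast in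
lemma X01_dvd_alpha {j : ℕ} (hj : j = 2 ∨ j = 3 ∨ j = 4 ∨ j = 5 ∨ j = 7) :
    X ((0 : Fin 3), (1 : Fin 4)) ∣ alpha k j := by
  rcases hj with rfl | rfl | rfl | rfl | rfl
  · simpa [alpha] using xv1_dvd_a2 k
  · have := dvd_rot_iter k 1 (xv4_dvd_a1 k)
    simpa [alpha] using this
  · have := dvd_rot_iter k 1 (xv4_dvd_a2 k)
    simpa [alpha] using this
  · have := dvd_rot_iter k 2 (xv3_dvd_a1 k)
    rw [show ((3 : Fin 4) + ((2:ℕ) : Fin 4)) = 1 from by decide] at this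
    simpa [alpha] using this
  · have := dvd_rot_iter k 3 (xv2_dvd_a1 k)
    rw [show ((2 : Fin 4) + ((3:ℕ) : Fin 4)) = 1 from by decide] at this
    simpa [alpha] using this

lemma alpha_one : alpha k 1 = a1 k := by simp [alpha]

lemma genR_val (m : ℕ) :
    (((genR k m : ↥(Rsub k)) : ↥(Scal k)) : B k) = monomial (m • av + 2 • uvec) 1 := by
  have h1 : (((genR k m : ↥(Rsub k)) : ↥(Scal k)) : B k) = a1 k ^ m * sig k ^ 2 := rfl
  rw [h1, a1_eq, sig_eq, monomial_pow, monomial_pow, monomial_mul, one_pow, one_pow, one_mul]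

lemma adjoin_coeff (p : ↥(Scal k)) (hp : p ∈ Algebra.adjoin k {σS k}) (s : ℕ) (hs : 1 ≤ s) :
    coeff (s • av) (p : B k) = 0 := by
  rw [Algebra.adjoin_singleton_eq_range_aeval] at hp
  obtain ⟨q, hq⟩ := hp
  have hval : (p : B k) = Polynomial.aeval (sig k) q := by
    rw [← hq]
    exact (Polynomial.aeval_algHom_apply (Scal k).val (σS k) q).symm
  rw [hval, Polynomial.aeval_eq_sum_range, coeff_sum]
  apply Finset.sum_eq_zero
  intro i _
  rw [sig_eq, monomial_pow, one_pow, coeff_smul, coeff_monomial]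
  have hne : ¬ (i • uvec = s • av) := by
    intro h
    rcases Nat.eq_zero_or_pos i with hi | hi
    · have := congrArg (fun f : V →₀ ℕ => f (0, 3)) h
      simp [hi, Finsupp.smul_apply, av_03, uvec_apply] at this
      omega
    · have := congrArg (fun f : V →₀ ℕ => f (0, 1)) h
      simp [Finsupp.smul_apply, av_01, uvec_apply] at this
      omega
  simp [hne]

lemma Ic_coeff (x : ↥(Scal k)) (hx : x ∈ Ic k) :
    ∀ d : V →₀ ℕ, d (0, 1) = 0 → coeff d (x : B k) = 0 := by
  classical
  induction hx using Submodule.span_induction with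
  | mem g hg =>
    intro d hd
    have hdvd : X ((0 : Fin 3), (1 : Fin 4)) ∣ (g : B k) := by
      rcases hg with rfl | ⟨j, hj, rfl⟩
      · have hsig : X ((0 : Fin 3), (1 : Fin 4)) ∣ sig k :=
          Finset.dvd_prod_of_mem _ (Finset.mem_univ _)
        rw [show ((σS k ^ 2 : ↥(Scal k)) : B k) = sig k ^ 2 from rfl]
        exact hsig.trans (dvd_pow_self _ two_ne_zero)
      · have hval : ((αS k j * αS k (j+1) * αS k (j+2) : ↥(Scal k)) : B k) =
            alpha k (idx j) * alpha k (idx (j+1)) * alpha k (idx (j+2)) := rfl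
        rw [hval]
        simp only [Finset.mem_Icc] at hj
        obtain ⟨hj1, hj2⟩ := hj
        interval_cases j <;>
          [ exact dvd_mul_of_dvd_left (dvd_mul_of_dvd_right
              (X01_dvd_alpha k (by norm_num [idx])) _) _;
            exact dvd_mul_of_dvd_left (dvd_mul_of_dvd_left
              (X01_dvd_alpha k (by norm_num [idx])) _) _;
            exact dvd_mul_of_dvd_left (dvd_mul_of_dvd_left
              (X01_dvd_alpha k (by norm_num [idx])) _) _;
            exact dvd_mul_of_dvd_left (dvd_mul_of_dvd_left
              (X01_dvd_alpha k (by norm_num [idx])) _) _;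
            exact dvd_mul_of_dvd_left (dvd_mul_of_dvd_left
              (X01_dvd_alpha k (by norm_num [idx])) _) _;
            exact dvd_mul_of_dvd_left (dvd_mul_of_dvd_right
              (X01_dvd_alpha k (by norm_num [idx])) _) _;
            exact dvd_mul_of_dvd_left (dvd_mul_of_dvd_left
              (X01_dvd_alpha k (by norm_num [idx])) _) _;
            exact dvd_mul_of_dvd_right
              (X01_dvd_alpha k (by norm_num [idx])) _ ]
    obtain ⟨h, hh⟩ := hdvd
    rw [hh, mul_comm, coeff_mul_X']
    simp [Finsupp.mem_support_iff, hd]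
  | zero => intro d hd; simp
  | add x y hx hy ihx ihy =>
    intro d hd
    have hcast : ((x + y : ↥(Scal k)) : B k) = (x : B k) + (y : B k) := rfl
    rw [hcast, coeff_add, ihx d hd, ihy d hd, add_zero]
  | smul r x hx ih =>
    intro d hd
    have hcast : ((r • x : ↥(Scal k)) : B k) = (r : B k) * (x : B k) := rfl
    rw [hcast, coeff_mul]
    apply Finset.sum_eq_zero
    intro ij hij
    rw [Finset.HasAntidiagonal.mem_antidiagonal] at hij
    have h2 : ij.2 (0, 1) = 0 := by
      have := congrArg (fun f : V →₀ ℕ => f (0, 1)) hij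
      simp only [Finsupp.add_apply] at this
      omega
    rw [ih ij.2 h2, mul_zero]

lemma Rsub_coeff (r : ↥(Scal k)) (hr : r ∈ Rsub k) (s : ℕ) (hs : 1 ≤ s) :
    coeff (s • av) (r : B k) = 0 := by
  obtain ⟨p, hp, i, hi, rfl⟩ := hr
  have hd : (s • av) ((0 : Fin 3), (1 : Fin 4)) = 0 := by
    rw [Finsupp.smul_apply, av_01, smul_zero]
  have hcast : ((p + i : ↥(Scal k)) : B k) = (p : B k) + (i : B k) := rfl
  rw [hcast, coeff_add, adjoin_coeff k p hp s hs, Ic_coeff k i hi _ hd, add_zero]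

instance instCR : CommRing ↥(Rsub k) := inferInstance
instance instMod : Module ↥(Rsub k) ↥(Rsub k) := inferInstance

def ψ : ↥(Rsub k) →ₐ[k] B k := ((Scal k).val).comp (Rsub k).val

lemma ψ_genR (m : ℕ) : ψ k (genR k m) = monomial (m • av + 2 • uvec) 1 :=
  genR_val k m

lemma genR_not_mem (n : ℕ) (hn : 1 ≤ n) : genR k (n + 1) ∉ Jn k n := by
  intro h
  classical
  obtain ⟨c, hsupp, hsum⟩ := Submodule.mem_span_set.mp h
  set d : V →₀ ℕ := (n + 1) • av + 2 • uvec with hd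
  have hco := congrArg (fun x : ↥(Rsub k) => coeff d (ψ k x)) hsum
  rw [map_finsuppSum, Finsupp.sum, coeff_sum, ψ_genR, coeff_monomial, if_pos rfl] at hco
  have hco0 : (1 : k) = 0 := by
    rw [← hco]
    apply Finset.sum_eq_zero
    intro g hg
    obtain ⟨m, hm, rfl⟩ := hsupp hg
    obtain ⟨hm1, hm2⟩ := hm
    rw [smul_eq_mul, map_mul, ψ_genR, coeff_mul_monomial']
    have hle : m • av + 2 • uvec ≤ d := by
      rw [hd]
      refine add_le_add_left ?_ _
      intro p
      simp only [Finsupp.smul_apply, smul_eq_mul]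
      exact Nat.mul_le_mul_right _ (by omega)
    rw [if_pos hle]
    have hsub : d - (m • av + 2 • uvec) = (n + 1 - m) • av := by
      rw [hd, show (n + 1) • av = (n + 1 - m) • av + m • av by
        rw [← add_smul]; congr 1; omega]
      rw [add_assoc, add_tsub_cancel_right]
    rw [hsub, show (ψ k) (c (genR k m)) = (((c (genR k m) : ↥(Rsub k)) : ↥(Scal k)) : B k) from rfl,
      Rsub_coeff k _ (c (genR k m)).2 (n + 1 - m) (by omega), zero_mul]
  exact one_ne_zero hco0

lemma Jn_mono (a b : ℕ) (hab : a ≤ b) : Jn k a ≤ Jn k b :=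
  Ideal.span_mono (Set.image_mono (Set.Icc_subset_Icc_right hab))

lemma Jn_lt (n : ℕ) (hn : 1 ≤ n) : Jn k n < Jn k (n + 1) := by
  refine lt_of_le_of_ne (Jn_mono k n (n + 1) (by omega)) ?_
  intro heq
  apply genR_not_mem k n hn
  rw [heq]
  exact Ideal.subset_span ⟨n + 1, ⟨by omega, le_refl _⟩, rfl⟩


/-- The chain of ideals `J_n = (ᾱ₁σ², …, ᾱ₁ⁿσ²)` of `R` is strictly increasing;
consequently `R` is not a noetherian ring. -/
theorem stmt7 :
    (∀ n : ℕ, 1 ≤ n → Jn k n < Jn k (n + 1)) ∧ ¬ IsNoetherianRing ↥(Rsub k) := by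
  refine ⟨Jn_lt k, ?_⟩
  intro hnoe
  obtain ⟨n0, hst⟩ := (monotone_stabilizes_iff_noetherian.mpr (isNoetherianRing_iff.mp hnoe))
    ⟨fun n => Jn k (n + 1), fun a b hab => Jn_mono k _ _ (by omega)⟩
  exact absurd (hst (n0 + 1) (by omega)) (ne_of_lt (Jn_lt k (n0 + 1) (by omega)))

end
end
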